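/- Suppose sup_{x,y∈U_i} m(x,y) ≤ C_m for all i, that R satisfies R(x,y) = conj(R(y,x)) for all x,y, and choose points x_i ∈ U_i. Suppose ∫_X |R(x,y)| m(x,y) dμ(y) ≤ A₁ for all x, ∫_X |R(x,y)| m(x,y) dμ(x) ≤ A₁ for all y, and ∫_X osc(y,x) m(x,y) dμ(x) ≤ A₂ for all y. Define K(x,y) = Σ_{i∈I} |R(x_i, y)| χ_{U_i}(x). Then: (1) for all x ∈ X, ∫_X K(x,y) m(x,y) dμ(y) ≤ N C_m A₁; and (2) for all y ∈ X, ∫_X K(x,y) m(x,y) dμ(x) ≤ N (A₂ + A₁). (Kernel estimates from the proof of Lemma 5.11.) -/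

import Mathlib

open MeasureTheory
open scoped ENNReal NNReal

/-- A tsum of at most `N` nonzero terms, each bounded by `B`, is at most `N * B`. -/
lemma tsum_le_of_encard {I : Type*} {S : Set I} {N : ℕ}
    (hS : S.encard ≤ N) {c : I → ℝ≥0∞} {B : ℝ≥0∞}
    (h0 : ∀ i ∉ S, c i = 0) (hB : ∀ i, c i ≤ B) :
    ∑' i, c i ≤ N * B := by
  have hfin : S.Finite := Set.finite_of_encard_le_coe hS
  have hcard : hfin.toFinset.card ≤ N := by
    rw [hfin.encard_eq_coe_toFinset_card] at hS
    exact_mod_cast hS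
  rw [tsum_eq_sum (s := hfin.toFinset) (fun i hi => h0 i (by simpa using hi))]
  calc ∑ i ∈ hfin.toFinset, c i ≤ ∑ _i ∈ hfin.toFinset, B :=
        Finset.sum_le_sum fun i _ => hB i
    _ = hfin.toFinset.card * B := by rw [Finset.sum_const, nsmul_eq_mul]
    _ ≤ N * B := mul_le_mul_left (by exact_mod_cast hcard) B

/-- Superadditivity of the lower Lebesgue integral over a countable sum
(no measurability needed). -/
lemma tsum_lintegral_le {X ι : Type*} [MeasurableSpace X] (μ : Measure X)
    (f : ι → X → ℝ≥0∞) :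
    ∑' i, ∫⁻ x, f i x ∂μ ≤ ∫⁻ x, ∑' i, f i x ∂μ := by
  rw [ENNReal.tsum_eq_iSup_sum]
  refine iSup_le fun s => le_trans ?_ (lintegral_mono fun x => ENNReal.sum_le_tsum s)
  induction s using Finset.cons_induction with
  | empty => simp
  | cons i s hi ih =>
      rw [Finset.sum_cons]
      refine le_trans (add_le_add_right ih _) ?_
      refine le_trans (le_lintegral_add _ _) (lintegral_mono fun x => ?_)
      rw [Finset.sum_cons]

/-- The oscillation kernel `osc_{𝒰,Γ}(x,y) = sup_{z ∈ Q_y} |R(x,y) − Γ(y,z) R(x,z)|`,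
where `Q_y = ⋃_{i : y ∈ U_i} U_i`. -/
noncomputable def osc {X I : Type*} (U : I → Set X) (R Γ : X → X → ℂ) (x y : X) : ℝ≥0∞ :=
  ⨆ z ∈ ⋃ i ∈ {i : I | y ∈ U i}, U i, (‖R x y - Γ y z * R x z‖₊ : ℝ≥0∞)

/-- **Kernel estimates from the proof of Lemma 5.11.** For the kernel
`K(x,y) = Σ_i |R(x_i,y)| χ_{U_i}(x)` one has `∫_X K(x,y) m(x,y) dμ(y) ≤ N C_m A₁`
and `∫_X K(x,y) m(x,y) dμ(x) ≤ N (A₂ + A₁)`. -/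
theorem stmt_15
    {X : Type*} [MeasurableSpace X] (μ : Measure X)
    {I : Type*} [Countable I] (U : I → Set X)
    (hUmeas : ∀ i, MeasurableSet (U i))
    (hUpos : ∀ i, 0 < μ (U i)) (hUfin : ∀ i, μ (U i) < ∞)
    (hcov : ∀ x : X, ∃ i, x ∈ U i)
    (N : ℕ) (hN : ∀ x : X, {i : I | x ∈ U i}.encard ≤ N)
    (m : X → X → ℝ) (hm1 : ∀ x y, 1 ≤ m x y) (hmsymm : ∀ x y, m x y = m y x)
    (hmsub : ∀ x y z, m x y ≤ m x z * m z y) (hmmeas : Measurable (Function.uncurry m))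
    (Cm : ℝ) (hCm : ∀ i, ∀ x ∈ U i, ∀ y ∈ U i, m x y ≤ Cm)
    (R Γ : X → X → ℂ) (hRmeas : Measurable (Function.uncurry R))
    (hΓ : ∀ x y, ‖Γ x y‖ = 1)
    (hRsymm : ∀ x y, R x y = (starRingEnd ℂ) (R y x))
    (xi : I → X) (hxi : ∀ i, xi i ∈ U i)
    (A₁ A₂ : ℝ≥0∞)
    (hA1 : ∀ x, ∫⁻ y, (‖R x y‖₊ : ℝ≥0∞) * ENNReal.ofReal (m x y) ∂μ ≤ A₁)
    (hA2 : ∀ y, ∫⁻ x, (‖R x y‖₊ : ℝ≥0∞) * ENNReal.ofReal (m x y) ∂μ ≤ A₁)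
    (hA3 : ∀ y, ∫⁻ x, osc U R Γ y x * ENNReal.ofReal (m x y) ∂μ ≤ A₂) :
    (∀ x : X,
      ∫⁻ y, (∑' i, (‖R (xi i) y‖₊ : ℝ≥0∞) * (U i).indicator (fun _ => (1 : ℝ≥0∞)) x)
          * ENNReal.ofReal (m x y) ∂μ
        ≤ N * ENNReal.ofReal Cm * A₁)
    ∧
    (∀ y : X,
      ∫⁻ x, (∑' i, (‖R (xi i) y‖₊ : ℝ≥0∞) * (U i).indicator (fun _ => (1 : ℝ≥0∞)) x)
          * ENNReal.ofReal (m x y) ∂μ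
        ≤ N * (A₂ + A₁)) := by
  have hRmeas_left : ∀ a : X, Measurable fun z => R a z :=
    fun a => hRmeas.comp measurable_prodMk_left
  have hRmeas_right : ∀ b : X, Measurable fun z => R z b :=
    fun b => hRmeas.comp (measurable_id.prodMk measurable_const)
  have hmmeas_left : ∀ a : X, Measurable fun z => ENNReal.ofReal (m a z) :=
    fun a => (hmmeas.comp measurable_prodMk_left).ennreal_ofReal
  have hmmeas_right : ∀ b : X, Measurable fun z => ENNReal.ofReal (m z b) :=
    fun b => (hmmeas.comp (measurable_id.prodMk measurable_const)).ennreal_ofReal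
  have hnormsymm : ∀ a b : X, ‖R a b‖₊ = ‖R b a‖₊ := by
    intro a b
    rw [hRsymm a b]
    simp
  constructor
  · -- Part 1
    intro x
    -- the term functions
    set F : I → X → ℝ≥0∞ := fun i y =>
      ((‖R (xi i) y‖₊ : ℝ≥0∞) * (U i).indicator (fun _ => (1 : ℝ≥0∞)) x)
        * ENNReal.ofReal (m x y) with hF
    have hFmeas : ∀ i, Measurable (F i) := fun i =>
      (((hRmeas_left (xi i)).nnnorm.coe_nnreal_ennreal).mul measurable_const).mul (hmmeas_left x)
    have key : ∫⁻ y, (∑' i, (‖R (xi i) y‖₊ : ℝ≥0∞)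
        * (U i).indicator (fun _ => (1 : ℝ≥0∞)) x) * ENNReal.ofReal (m x y) ∂μ
        = ∑' i, ∫⁻ y, F i y ∂μ := by
      rw [← lintegral_tsum (fun i => (hFmeas i).aemeasurable)]
      refine lintegral_congr fun y => ?_
      rw [ENNReal.tsum_mul_right]
    rw [key]
    have hCm0 : 0 ≤ Cm := by
      rcases hcov x with ⟨i, hxU⟩
      exact le_trans (le_trans zero_le_one (hm1 x x)) (hCm i x hxU x hxU)
    have hterm : ∀ i, ∫⁻ y, F i y ∂μ ≤ ENNReal.ofReal Cm * A₁ := by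
      intro i
      by_cases hx : x ∈ U i
      · have hb : ∀ y, F i y ≤ ENNReal.ofReal Cm
            * ((‖R (xi i) y‖₊ : ℝ≥0∞) * ENNReal.ofReal (m (xi i) y)) := by
          intro y
          have hmle : m x y ≤ Cm * m (xi i) y :=
            le_trans (hmsub x y (xi i)) (by
              have h1 : m x (xi i) ≤ Cm := hCm i x hx (xi i) (hxi i)
              have h2 : 0 ≤ m (xi i) y := le_trans zero_le_one (hm1 _ _)
              nlinarith)
          have : ENNReal.ofReal (m x y)
              ≤ ENNReal.ofReal Cm * ENNReal.ofReal (m (xi i) y) := by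
            rw [← ENNReal.ofReal_mul hCm0]
            exact ENNReal.ofReal_le_ofReal hmle
          calc F i y ≤ (‖R (xi i) y‖₊ : ℝ≥0∞)
                * (ENNReal.ofReal Cm * ENNReal.ofReal (m (xi i) y)) := by
                rw [hF]
                simp only [Set.indicator_of_mem hx, mul_one]
                exact mul_le_mul_right this _
            _ = ENNReal.ofReal Cm
                * ((‖R (xi i) y‖₊ : ℝ≥0∞) * ENNReal.ofReal (m (xi i) y)) := by ring
        calc ∫⁻ y, F i y ∂μ
            ≤ ∫⁻ y, ENNReal.ofReal Cm
              * ((‖R (xi i) y‖₊ : ℝ≥0∞) * ENNReal.ofReal (m (xi i) y)) ∂μ :=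
              lintegral_mono hb
          _ = ENNReal.ofReal Cm
              * ∫⁻ y, (‖R (xi i) y‖₊ : ℝ≥0∞) * ENNReal.ofReal (m (xi i) y) ∂μ :=
              lintegral_const_mul' _ _ ENNReal.ofReal_ne_top
          _ ≤ ENNReal.ofReal Cm * A₁ := mul_le_mul_right (hA1 (xi i)) _
      · have : ∀ y, F i y = 0 := by
          intro y
          rw [hF]
          simp [Set.indicator_of_notMem hx]
        simp [this]
    have h0 : ∀ i ∉ {i : I | x ∈ U i}, ∫⁻ y, F i y ∂μ = 0 := by
      intro i hi
      have hx : x ∉ U i := hi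
      have : ∀ y, F i y = 0 := by
        intro y
        rw [hF]
        simp [Set.indicator_of_notMem hx]
      simp [this]
    calc ∑' i, ∫⁻ y, F i y ∂μ ≤ N * (ENNReal.ofReal Cm * A₁) :=
          tsum_le_of_encard (hN x) h0 hterm
      _ = N * ENNReal.ofReal Cm * A₁ := by rw [mul_assoc]
  · -- Part 2
    intro y
    set G : I → X → ℝ≥0∞ := fun i x =>
      ((‖R (xi i) y‖₊ : ℝ≥0∞) * (U i).indicator (fun _ => (1 : ℝ≥0∞)) x)
        * ENNReal.ofReal (m x y) with hG
    set B : I → X → ℝ≥0∞ := fun i x =>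
      (U i).indicator (fun _ => (1 : ℝ≥0∞)) x
        * ((‖R x y‖₊ : ℝ≥0∞) * ENNReal.ofReal (m x y)) with hB
    set C : I → X → ℝ≥0∞ := fun i x => G i x - B i x with hC
    have hGmeas : ∀ i, Measurable (G i) := fun i =>
      ((measurable_const.mul
        ((measurable_const.indicator (hUmeas i)))).mul (hmmeas_right y))
    have hBmeas : ∀ i, Measurable (B i) := fun i =>
      (measurable_const.indicator (hUmeas i)).mul
        (((hRmeas_right y).nnnorm.coe_nnreal_ennreal).mul (hmmeas_right y))
    have hCmeas : ∀ i, Measurable (C i) := fun i => (hGmeas i).sub (hBmeas i)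
    -- key pointwise bound: G ≤ indicator * osc * m + B
    have hpoint : ∀ i x, x ∈ U i →
        G i x ≤ (U i).indicator (fun _ => (1 : ℝ≥0∞)) x
          * (osc U R Γ y x * ENNReal.ofReal (m x y)) + B i x := by
      intro i x hx
      have hoscle : (‖R y x - Γ x (xi i) * R y (xi i)‖₊ : ℝ≥0∞) ≤ osc U R Γ y x := by
        have hmem : xi i ∈ ⋃ j ∈ {j : I | x ∈ U j}, U j := by
          refine Set.mem_biUnion (show i ∈ {j : I | x ∈ U j} from hx) (hxi i)
        exact le_iSup₂ (f := fun z (_ : z ∈ ⋃ j ∈ {j : I | x ∈ U j}, U j) =>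
          (‖R y x - Γ x z * R y z‖₊ : ℝ≥0∞)) (xi i) hmem
      have hnorm : (‖R (xi i) y‖₊ : ℝ≥0∞)
          ≤ (‖R y x - Γ x (xi i) * R y (xi i)‖₊ : ℝ≥0∞) + (‖R x y‖₊ : ℝ≥0∞) := by
        have hreal : ‖R (xi i) y‖ ≤ ‖R y x - Γ x (xi i) * R y (xi i)‖ + ‖R x y‖ := by
          have e1 : ‖R (xi i) y‖ = ‖R y (xi i)‖ := by rw [hRsymm]; simp
          have e2 : ‖R x y‖ = ‖R y x‖ := by rw [hRsymm x y]; simp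
          have e3 : ‖R y (xi i)‖ = ‖Γ x (xi i) * R y (xi i)‖ := by
            rw [norm_mul, hΓ, one_mul]
          calc ‖R (xi i) y‖ = ‖Γ x (xi i) * R y (xi i)‖ := by rw [e1, e3]
            _ = ‖R y x - (R y x - Γ x (xi i) * R y (xi i))‖ := by ring_nf
            _ ≤ ‖R y x‖ + ‖R y x - Γ x (xi i) * R y (xi i)‖ := norm_sub_le _ _
            _ = ‖R y x - Γ x (xi i) * R y (xi i)‖ + ‖R x y‖ := by rw [e2]; ring
        have : ‖R (xi i) y‖₊ ≤ ‖R y x - Γ x (xi i) * R y (xi i)‖₊ + ‖R x y‖₊ := by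
          rw [← NNReal.coe_le_coe]
          push_cast
          exact hreal
        exact_mod_cast this
      calc G i x = (‖R (xi i) y‖₊ : ℝ≥0∞) * ENNReal.ofReal (m x y) := by
            rw [hG]; simp [Set.indicator_of_mem hx]
        _ ≤ ((‖R y x - Γ x (xi i) * R y (xi i)‖₊ : ℝ≥0∞) + (‖R x y‖₊ : ℝ≥0∞))
            * ENNReal.ofReal (m x y) := mul_le_mul_left hnorm _
        _ = (‖R y x - Γ x (xi i) * R y (xi i)‖₊ : ℝ≥0∞) * ENNReal.ofReal (m x y)
            + (‖R x y‖₊ : ℝ≥0∞) * ENNReal.ofReal (m x y) := by rw [add_mul]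
        _ ≤ (U i).indicator (fun _ => (1 : ℝ≥0∞)) x
            * (osc U R Γ y x * ENNReal.ofReal (m x y)) + B i x := by
            rw [hB]
            simp only [Set.indicator_of_mem hx, one_mul]
            exact add_le_add_left (mul_le_mul_left hoscle _) _
    have hG0 : ∀ i x, x ∉ U i → G i x = 0 := by
      intro i x hx
      rw [hG]
      simp [Set.indicator_of_notMem hx]
    -- C is bounded pointwise by indicator * osc * m
    have hCle : ∀ i x, C i x ≤ (U i).indicator (fun _ => (1 : ℝ≥0∞)) x
        * (osc U R Γ y x * ENNReal.ofReal (m x y)) := by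
      intro i x
      by_cases hx : x ∈ U i
      · exact tsub_le_iff_right.2 (hpoint i x hx)
      · have : C i x ≤ G i x := tsub_le_self
        rw [hG0 i x hx] at this
        exact le_trans this zero_le
    have key : ∫⁻ x, (∑' i, (‖R (xi i) y‖₊ : ℝ≥0∞)
        * (U i).indicator (fun _ => (1 : ℝ≥0∞)) x) * ENNReal.ofReal (m x y) ∂μ
        = ∑' i, ∫⁻ x, G i x ∂μ := by
      rw [← lintegral_tsum (fun i => (hGmeas i).aemeasurable)]
      refine lintegral_congr fun x => ?_
      rw [ENNReal.tsum_mul_right]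
    rw [key]
    have step1 : ∀ i, ∫⁻ x, G i x ∂μ ≤ ∫⁻ x, C i x ∂μ + ∫⁻ x, B i x ∂μ := by
      intro i
      calc ∫⁻ x, G i x ∂μ ≤ ∫⁻ x, C i x + B i x ∂μ :=
            lintegral_mono fun x => le_tsub_add
        _ = ∫⁻ x, C i x ∂μ + ∫⁻ x, B i x ∂μ := lintegral_add_left (hCmeas i) _
    have hCsum : ∑' i, ∫⁻ x, C i x ∂μ ≤ (N : ℝ≥0∞) * A₂ := by
      calc ∑' i, ∫⁻ x, C i x ∂μ ≤ ∫⁻ x, ∑' i, C i x ∂μ := tsum_lintegral_le μ C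
        _ ≤ ∫⁻ x, (N : ℝ≥0∞) * (osc U R Γ y x * ENNReal.ofReal (m x y)) ∂μ := by
            refine lintegral_mono fun x => ?_
            refine tsum_le_of_encard (hN x) ?_ ?_
            · intro i hi
              have hx : x ∉ U i := hi
              have : C i x ≤ G i x := tsub_le_self
              rw [hG0 i x hx] at this
              exact le_antisymm this zero_le
            · intro i
              refine le_trans (hCle i x) ?_
              by_cases hx : x ∈ U i
              · simp [Set.indicator_of_mem hx]
              · simp [Set.indicator_of_notMem hx]
        _ = (N : ℝ≥0∞) * ∫⁻ x, osc U R Γ y x * ENNReal.ofReal (m x y) ∂μ :=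
            lintegral_const_mul' _ _ (ENNReal.natCast_ne_top N)
        _ ≤ (N : ℝ≥0∞) * A₂ := mul_le_mul_right (hA3 y) _
    have hBsum : ∑' i, ∫⁻ x, B i x ∂μ ≤ (N : ℝ≥0∞) * A₁ := by
      calc ∑' i, ∫⁻ x, B i x ∂μ ≤ ∫⁻ x, ∑' i, B i x ∂μ := tsum_lintegral_le μ B
        _ ≤ ∫⁻ x, (N : ℝ≥0∞) * ((‖R x y‖₊ : ℝ≥0∞) * ENNReal.ofReal (m x y)) ∂μ := by
            refine lintegral_mono fun x => ?_
            refine tsum_le_of_encard (hN x) ?_ ?_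
            · intro i hi
              have hx : x ∉ U i := hi
              rw [hB]
              simp [Set.indicator_of_notMem hx]
            · intro i
              rw [hB]
              by_cases hx : x ∈ U i
              · simp [Set.indicator_of_mem hx]
              · simp [Set.indicator_of_notMem hx]
        _ = (N : ℝ≥0∞) * ∫⁻ x, (‖R x y‖₊ : ℝ≥0∞) * ENNReal.ofReal (m x y) ∂μ :=
            lintegral_const_mul' _ _ (ENNReal.natCast_ne_top N)
        _ ≤ (N : ℝ≥0∞) * A₁ := mul_le_mul_right (hA2 y) _
    calc ∑' i, ∫⁻ x, G i x ∂μ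
        ≤ ∑' i, (∫⁻ x, C i x ∂μ + ∫⁻ x, B i x ∂μ) := ENNReal.tsum_le_tsum step1
      _ = (∑' i, ∫⁻ x, C i x ∂μ) + ∑' i, ∫⁻ x, B i x ∂μ := ENNReal.tsum_add
      _ ≤ (N : ℝ≥0∞) * A₂ + (N : ℝ≥0∞) * A₁ := add_le_add hCsum hBsum
      _ = N * (A₂ + A₁) := by rw [mul_add]
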